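/- Let π ∈ D_n and m ≥ 0. Define A_π(m) = Σ_{σ,τ ∈ D_n} SSYT(σ, m-2n+1) · t_{σ,τ}^π · SSYT(τ*, n), with SSYT the hook-content polynomial. Assuming (i) t_{σ,τ}^π = 0 unless σ ≤ π, (ii) t_{π,0_n}^π = 1 and t_{π,τ}^π = 0 for τ ≠ 0_n, then A_π(m), as a polynomial in m, has degree deg(π) and leading coefficient 1/H(π). -/

import Mathlib

open scoped Classical
open Polynomial

/-- Number of 1s among the first `i` letters of `σ`. -/
def psum (n : ℕ) (σ : Fin (2*n) → Bool) (i : ℕ) : ℕ :=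
  (Finset.univ.filter (fun j : Fin (2*n) => (j : ℕ) < i ∧ σ j = true)).card

/-- Number of 0s among the first `i` letters of `σ`. -/
def zsum (n : ℕ) (σ : Fin (2*n) → Bool) (i : ℕ) : ℕ :=
  (Finset.univ.filter (fun j : Fin (2*n) => (j : ℕ) < i ∧ σ j = false)).card

/-- `σ` is a Dyck word of length `2n`. -/
def IsDyckFun (n : ℕ) (σ : Fin (2*n) → Bool) : Prop :=
  (Finset.univ.filter (fun j : Fin (2*n) => σ j = false)).card = n ∧
  (Finset.univ.filter (fun j : Fin (2*n) => σ j = true)).card = n ∧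
  ∀ i : ℕ, psum n σ i ≤ zsum n σ i

/-- The diagram-inclusion order on words: `σ ≤ π` iff `σ_{≤i} ≤ π_{≤i}` for all `i`. -/
def wordLE (n : ℕ) (σ π : Fin (2*n) → Bool) : Prop := ∀ i : ℕ, psum n σ i ≤ psum n π i

/-- The finite set `D_n` of Dyck words of length `2n`. -/
noncomputable def DnF (n : ℕ) : Finset (Fin (2*n) → Bool) :=
  Finset.univ.filter (IsDyckFun n)

/-- The boxes of the Ferrers diagram of the word `σ`, encoded as its inversion
pairs: pairs `(i, j)` with `i < j`, `σ_i = 1`, `σ_j = 0`.  In particular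
`deg σ = (boxesW n σ).card`. -/
def boxesW (n : ℕ) (σ : Fin (2*n) → Bool) : Finset (Fin (2*n) × Fin (2*n)) :=
  Finset.univ.filter (fun p => p.1 < p.2 ∧ σ p.1 = true ∧ σ p.2 = false)

/-- The hook length of the box corresponding to the inversion pair `(i, j)` of
a word is `j - i`. -/
def hookW {n : ℕ} (p : Fin (2*n) × Fin (2*n)) : ℕ := (p.2 : ℕ) - (p.1 : ℕ)

/-- The content of the box of `σ` corresponding to the inversion pair `(i, j)`:
`(# of 1s at positions ≤ i) + (# of 0s at positions ≤ j) - n - 1`. -/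
def contW (n : ℕ) (σ : Fin (2*n) → Bool) (p : Fin (2*n) × Fin (2*n)) : ℚ :=
  ((Finset.univ.filter (fun j : Fin (2*n) => j ≤ p.1 ∧ σ j = true)).card : ℚ) +
  ((Finset.univ.filter (fun j : Fin (2*n) => j ≤ p.2 ∧ σ j = false)).card : ℚ) - n - 1

/-- The conjugate word, `(σ*)_i = 1 - σ_{2n+1-i}`. -/
def conjF (n : ℕ) (σ : Fin (2*n) → Bool) : Fin (2*n) → Bool := fun i => ! σ i.rev

/-- The value `SSYT(σ, N) = ∏_{u ∈ σ} (N + c(u))/h(u)` of the hook content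
polynomial of (the diagram of) the word `σ` at `N`. -/
def ssytVal (n : ℕ) (σ : Fin (2*n) → Bool) (N : ℚ) : ℚ :=
  ∏ p ∈ boxesW n σ, (N + contW n σ p) / (hookW p : ℚ)

/-- The word `0_n = 0^n 1^n` (the empty diagram). -/
def zeroF (n : ℕ) : Fin (2*n) → Bool := fun j => decide (n ≤ (j : ℕ))

/-- The polynomial (in `m`) `A_π(m) = Σ_{σ,τ ∈ D_n} SSYT(σ, m-2n+1) ⬝ t_{σ,τ}^π
⬝ SSYT(τ*, n)`, where `SSYT(σ, m-2n+1)` is the hook content polynomial. -/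
noncomputable def Apoly (n : ℕ)
    (t : (Fin (2*n) → Bool) → (Fin (2*n) → Bool) → ℕ) : Polynomial ℚ :=
  ∑ σ ∈ DnF n, ∑ τ ∈ DnF n,
    C ((t σ τ : ℚ)) *
      ((∏ p ∈ boxesW n σ,
          (C (1 / (hookW p : ℚ)) * (X + C (contW n σ p - 2 * (n : ℚ) + 1)))) *
        C (ssytVal n (conjF n τ) (n : ℚ)))

-- ============ auxiliary lemmas ============

lemma psum_zero (n : ℕ) (σ : Fin (2*n) → Bool) : psum n σ 0 = 0 := by
  simp [psum]

lemma psum_succ (n : ℕ) (σ : Fin (2*n) → Bool) (j : Fin (2*n)) :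
    psum n σ (j.val + 1) = psum n σ j.val + (if σ j = true then 1 else 0) := by
  classical
  have hset : (Finset.univ.filter (fun k : Fin (2*n) => (k:ℕ) < j.val + 1 ∧ σ k = true))
      = (Finset.univ.filter (fun k : Fin (2*n) => (k:ℕ) < j.val ∧ σ k = true)) ∪
        (Finset.univ.filter (fun k : Fin (2*n) => k = j ∧ σ k = true)) := by
    ext k
    simp only [Finset.mem_filter, Finset.mem_union, Finset.mem_univ, true_and]
    constructor
    · rintro ⟨hk, hs⟩
      rcases Nat.lt_succ_iff_lt_or_eq.mp hk with h | h
      · exact Or.inl ⟨h, hs⟩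
      · exact Or.inr ⟨Fin.ext h, hs⟩
    · rintro (⟨hk, hs⟩ | ⟨hk, hs⟩)
      · exact ⟨Nat.lt_succ_of_lt hk, hs⟩
      · exact ⟨by rw [hk]; exact Nat.lt_succ_self _, hs⟩
  have hdisj : Disjoint
      (Finset.univ.filter (fun k : Fin (2*n) => (k:ℕ) < j.val ∧ σ k = true))
      (Finset.univ.filter (fun k : Fin (2*n) => k = j ∧ σ k = true)) := by
    rw [Finset.disjoint_left]
    intro k hk hk'
    simp only [Finset.mem_filter, Finset.mem_univ, true_and] at hk hk'
    rw [hk'.1] at hk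
    exact lt_irrefl _ hk.1
  have hlast : (Finset.univ.filter (fun k : Fin (2*n) => k = j ∧ σ k = true)).card
      = (if σ j = true then 1 else 0) := by
    by_cases hσ : σ j = true
    · have : (Finset.univ.filter (fun k : Fin (2*n) => k = j ∧ σ k = true)) = {j} := by
        ext k
        simp only [Finset.mem_filter, Finset.mem_univ, true_and, Finset.mem_singleton]
        constructor
        · rintro ⟨h, _⟩; exact h
        · rintro rfl; exact ⟨rfl, hσ⟩
      rw [this]; simp [hσ]
    · have : (Finset.univ.filter (fun k : Fin (2*n) => k = j ∧ σ k = true)) = ∅ := by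
        ext k
        simp only [Finset.mem_filter, Finset.mem_univ, true_and, Finset.notMem_empty,
          iff_false, not_and]
        rintro rfl; exact hσ
      rw [this]; simp [hσ]
  rw [psum, hset, Finset.card_union_of_disjoint hdisj, hlast]
  rfl

lemma eq_of_psum_eq (n : ℕ) (σ π : Fin (2*n) → Bool)
    (h : ∀ i ∈ Finset.range (2*n), psum n σ (i+1) = psum n π (i+1)) : σ = π := by
  funext j
  have h1 : psum n σ (j.val + 1) = psum n π (j.val + 1) :=
    h j.val (Finset.mem_range.mpr j.isLt)
  have h0 : psum n σ j.val = psum n π j.val := by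
    rcases Nat.eq_zero_or_pos j.val with hj | hj
    · rw [hj, psum_zero, psum_zero]
    · obtain ⟨m, hm⟩ := Nat.exists_eq_add_of_lt hj
      have hm' : j.val = m + 1 := by omega
      have : m < 2*n := by have := j.isLt; omega
      rw [hm']
      exact h m (Finset.mem_range.mpr this)
  rw [psum_succ, psum_succ, h0] at h1
  have h2 : (if σ j = true then 1 else 0) = (if π j = true then 1 else 0) := by omega
  cases hσ : σ j <;> cases hπ' : π j <;> simp_all

def pairSetW (n : ℕ) (σ : Fin (2*n) → Bool) : Finset (Fin (2*n) × Fin (2*n)) :=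
  Finset.univ.filter (fun p => p.1 ≤ p.2 ∧ σ p.1 = true)

def truePairsW (n : ℕ) (σ : Fin (2*n) → Bool) : Finset (Fin (2*n) × Fin (2*n)) :=
  Finset.univ.filter (fun p => p.1 ≤ p.2 ∧ σ p.1 = true ∧ σ p.2 = true)

lemma sum_psum_eq (n : ℕ) (σ : Fin (2*n) → Bool) :
    ∑ i ∈ Finset.range (2*n), psum n σ (i+1) = (pairSetW n σ).card := by
  classical
  have hpsum : ∀ i : ℕ, psum n σ (i+1)
      = ∑ k : Fin (2*n), if (k:ℕ) ≤ i ∧ σ k = true then 1 else 0 := by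
    intro i
    rw [psum, Finset.card_filter]
    exact Finset.sum_congr rfl (fun k _ => if_congr (and_congr_left' Nat.lt_succ_iff) rfl rfl)
  rw [pairSetW, Finset.card_filter]
  rw [Fintype.sum_prod_type]
  calc ∑ i ∈ Finset.range (2*n), psum n σ (i+1)
      = ∑ i ∈ Finset.range (2*n), ∑ k : Fin (2*n),
          if (k:ℕ) ≤ i ∧ σ k = true then 1 else 0 := by
        exact Finset.sum_congr rfl (fun i _ => hpsum i)
    _ = ∑ k : Fin (2*n), ∑ i ∈ Finset.range (2*n),
          if (k:ℕ) ≤ i ∧ σ k = true then 1 else 0 := Finset.sum_comm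
    _ = ∑ k : Fin (2*n), ∑ m : Fin (2*n),
          if ((k, m) : Fin (2*n) × Fin (2*n)).1 ≤ (k, m).2 ∧ σ (k, m).1 = true
          then 1 else 0 := by
        refine Finset.sum_congr rfl (fun k _ => ?_)
        rw [← Fin.sum_univ_eq_sum_range (fun i => if (k:ℕ) ≤ i ∧ σ k = true then 1 else 0) (2*n)]
        refine Finset.sum_congr rfl (fun m _ => ?_)
        exact if_congr (and_congr_left' Fin.le_def.symm) rfl rfl

lemma pairSet_card (n : ℕ) (σ : Fin (2*n) → Bool) :
    (pairSetW n σ).card = (boxesW n σ).card + (truePairsW n σ).card := by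
  classical
  have hset : pairSetW n σ = boxesW n σ ∪ truePairsW n σ := by
    ext p
    simp only [pairSetW, boxesW, truePairsW, Finset.mem_filter, Finset.mem_union,
      Finset.mem_univ, true_and]
    constructor
    · rintro ⟨hle, h1⟩
      cases h2 : σ p.2 with
      | false =>
          refine Or.inl ⟨lt_of_le_of_ne hle ?_, h1, rfl⟩
          intro he
          rw [he] at h1; rw [h1] at h2; exact Bool.noConfusion h2
      | true => exact Or.inr ⟨hle, h1, rfl⟩
    · rintro (⟨hlt, h1, _⟩ | ⟨hle, h1, _⟩)
      · exact ⟨le_of_lt hlt, h1⟩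
      · exact ⟨hle, h1⟩
  have hdisj : Disjoint (boxesW n σ) (truePairsW n σ) := by
    rw [Finset.disjoint_left]
    intro p hp hp'
    simp only [boxesW, truePairsW, Finset.mem_filter, Finset.mem_univ, true_and] at hp hp'
    rw [hp.2.2] at hp'
    exact Bool.noConfusion hp'.2.2
  rw [hset, Finset.card_union_of_disjoint hdisj]

lemma truePairs_card (n : ℕ) (σ : Fin (2*n) → Bool)
    (h : (Finset.univ.filter (fun j : Fin (2*n) => σ j = true)).card = n) :
    2 * (truePairsW n σ).card = n * n + n := by
  classical
  set T := Finset.univ.filter (fun j : Fin (2*n) => σ j = true) with hT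
  set S := T ×ˢ T with hS
  set A := S.filter (fun p => p.1 ≤ p.2) with hA
  set B := S.filter (fun p => p.2 ≤ p.1) with hB
  have htp : truePairsW n σ = A := by
    ext p
    simp only [truePairsW, hA, hS, hT, Finset.mem_filter, Finset.mem_product,
      Finset.mem_univ, true_and]
    tauto
  have hAB : A.card = B.card := by
    refine Finset.card_bij' (fun p _ => (p.2, p.1)) (fun p _ => (p.2, p.1)) ?_ ?_ ?_ ?_
    · intro p hp
      simp only [hA, hB, hS, Finset.mem_filter, Finset.mem_product] at hp ⊢
      tauto
    · intro p hp
      simp only [hA, hB, hS, Finset.mem_filter, Finset.mem_product] at hp ⊢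
      tauto
    · intro p _; rfl
    · intro p _; rfl
  have hunion : A ∪ B = S := by
    ext p
    simp only [hA, hB, Finset.mem_union, Finset.mem_filter]
    rcases le_total p.1 p.2 with h' | h' <;> tauto
  have hinter : A ∩ B = S.filter (fun p => p.1 = p.2) := by
    ext p
    simp only [hA, hB, Finset.mem_inter, Finset.mem_filter]
    constructor
    · rintro ⟨⟨hs, h1⟩, ⟨_, h2⟩⟩
      exact ⟨hs, le_antisymm h1 h2⟩
    · rintro ⟨hs, he⟩
      exact ⟨⟨hs, le_of_eq he⟩, ⟨hs, le_of_eq he.symm⟩⟩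
  have hdiag : (S.filter (fun p => p.1 = p.2)).card = T.card := by
    refine Finset.card_bij' (fun p _ => p.1) (fun a _ => (a, a)) ?_ ?_ ?_ ?_
    · intro p hp
      simp only [hS, Finset.mem_filter, Finset.mem_product] at hp
      exact hp.1.1
    · intro a ha
      simp only [hS, Finset.mem_filter, Finset.mem_product]
      simp [ha]
    · intro p hp
      simp only [hS, Finset.mem_filter, Finset.mem_product] at hp
      obtain ⟨a, b⟩ := p
      simp only at hp ⊢
      rw [hp.2]
    · intro a _; rfl
  have hkey : (A ∩ B).card + (A ∪ B).card = A.card + B.card :=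
    Finset.card_inter_add_card_union A B
  have hScard : S.card = n * n := by
    rw [hS, Finset.card_product, h]
  rw [hunion, hinter, hdiag, hScard, h, ← hAB] at hkey
  rw [htp]
  omega

lemma boxes_lt (n : ℕ) (σ π : Fin (2*n) → Bool)
    (hσ : IsDyckFun n σ) (hπ : IsDyckFun n π)
    (hle : wordLE n σ π) (hne : σ ≠ π) :
    (boxesW n σ).card < (boxesW n π).card := by
  have hFlt : ∑ i ∈ Finset.range (2*n), psum n σ (i+1)
      < ∑ i ∈ Finset.range (2*n), psum n π (i+1) := by
    refine Finset.sum_lt_sum (fun i _ => hle (i+1)) ?_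
    by_contra hcon
    push_neg at hcon
    exact hne (eq_of_psum_eq n σ π (fun i hi => le_antisymm (hle (i+1)) (hcon i hi)))
  rw [sum_psum_eq, sum_psum_eq, pairSet_card, pairSet_card] at hFlt
  have h1 := truePairs_card n σ hσ.2.1
  have h2 := truePairs_card n π hπ.2.1
  omega

lemma zeroF_isDyck (n : ℕ) : IsDyckFun n (zeroF n) := by
  classical
  have hff : (Finset.univ.filter (fun j : Fin (2*n) => zeroF n j = false))
      = Finset.univ.filter (fun j : Fin (2*n) => (j:ℕ) < n) := by
    ext j; simp [zeroF, Nat.not_le]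
  have hcard_lt : (Finset.univ.filter (fun j : Fin (2*n) => (j:ℕ) < n)).card = n := by
    have hbij : (Finset.univ.filter (fun j : Fin (2*n) => (j:ℕ) < n)).card
        = (Finset.range n).card := by
      refine Finset.card_bij (fun j _ => (j : ℕ)) ?_ ?_ ?_
      · intro a ha
        simp only [Finset.mem_filter, Finset.mem_univ, true_and] at ha
        exact Finset.mem_range.mpr ha
      · intro a ha b hb hab
        exact Fin.ext hab
      · intro b hb
        have hb' : b < n := Finset.mem_range.mp hb
        refine ⟨⟨b, by omega⟩, ?_, rfl⟩
        simp [hb']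
    rw [hbij, Finset.card_range]
  have hfalse : (Finset.univ.filter (fun j : Fin (2*n) => zeroF n j = false)).card = n := by
    rw [hff]; exact hcard_lt
  have htotal := Finset.card_filter_add_card_filter_not
    (s := (Finset.univ : Finset (Fin (2*n)))) (p := fun j => zeroF n j = false)
  have huniv : (Finset.univ : Finset (Fin (2*n))).card = 2*n := by
    simp
  have htt : (Finset.univ.filter (fun j : Fin (2*n) => ¬ zeroF n j = false))
      = Finset.univ.filter (fun j : Fin (2*n) => zeroF n j = true) := by
    ext j; simp
  have htrue : (Finset.univ.filter (fun j : Fin (2*n) => zeroF n j = true)).card = n := by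
    rw [← htt]; omega
  refine ⟨hfalse, htrue, ?_⟩
  intro i
  rw [psum, zsum]
  refine Finset.card_le_card_of_injOn
    (fun j => (⟨(j:ℕ) - n, Nat.lt_of_le_of_lt (Nat.sub_le _ _) j.isLt⟩ : Fin (2*n))) ?_ ?_
  · intro j hj
    simp only [Finset.mem_coe, Finset.mem_filter, Finset.mem_univ, true_and] at hj ⊢
    have hj2 : n ≤ (j:ℕ) := by simpa [zeroF] using hj.2
    have hj3 : (j:ℕ) < 2*n := j.isLt
    have hj1 : (j:ℕ) < i := hj.1
    constructor
    · show (j:ℕ) - n < i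
      omega
    · show zeroF n _ = false
      simp only [zeroF, decide_eq_false_iff_not, Nat.not_le]
      show (j:ℕ) - n < n
      omega
  · intro a ha b hb hab
    simp only [Finset.coe_filter, Finset.mem_univ, true_and, Set.mem_setOf_eq] at ha hb
    have ha2 : n ≤ (a:ℕ) := by simpa [zeroF] using ha.2
    have hb2 : n ≤ (b:ℕ) := by simpa [zeroF] using hb.2
    have hv : (a:ℕ) - n = (b:ℕ) - n := congrArg Fin.val hab
    exact Fin.ext (by omega)

lemma boxes_conj_zero (n : ℕ) : boxesW n (conjF n (zeroF n)) = ∅ := by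
  classical
  rw [Finset.eq_empty_iff_forall_notMem]
  intro p hp
  simp only [boxesW, Finset.mem_filter, Finset.mem_univ, true_and] at hp
  obtain ⟨hlt, h1, h2⟩ := hp
  have hrev : p.2.rev < p.1.rev := Fin.rev_lt_rev.mpr hlt
  have h1' : (p.1.rev : ℕ) < n := by
    have := h1
    simp only [conjF, zeroF] at this
    simpa [Nat.not_le] using this
  have h2' : n ≤ (p.2.rev : ℕ) := by
    have := h2
    simp only [conjF, zeroF] at this
    simpa using this
  have : (p.2.rev : ℕ) < (p.1.rev : ℕ) := hrev
  omega

lemma ssyt_conj_zero (n : ℕ) : ssytVal n (conjF n (zeroF n)) (n : ℚ) = 1 := by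
  rw [ssytVal, boxes_conj_zero, Finset.prod_empty]

noncomputable def Pw (n : ℕ) (σ : Fin (2*n) → Bool) : Polynomial ℚ :=
  ∏ p ∈ boxesW n σ,
    (C (1 / (hookW p : ℚ)) * (X + C (contW n σ p - 2 * (n : ℚ) + 1)))

lemma hook_ne {n : ℕ} {σ : Fin (2*n) → Bool} {p : Fin (2*n) × Fin (2*n)}
    (hp : p ∈ boxesW n σ) : (1 : ℚ) / (hookW p : ℚ) ≠ 0 := by
  simp only [boxesW, Finset.mem_filter, Finset.mem_univ, true_and] at hp
  have hlt : (p.1 : ℕ) < (p.2 : ℕ) := hp.1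
  have : hookW p ≠ 0 := by
    rw [hookW]; omega
  exact one_div_ne_zero (Nat.cast_ne_zero.mpr this)

lemma Pw_factor_ne {n : ℕ} {σ : Fin (2*n) → Bool} {p : Fin (2*n) × Fin (2*n)}
    (hp : p ∈ boxesW n σ) :
    C (1 / (hookW p : ℚ)) * (X + C (contW n σ p - 2 * (n : ℚ) + 1)) ≠ 0 :=
  mul_ne_zero (by simpa using hook_ne hp) (X_add_C_ne_zero _)

lemma Pw_natDegree (n : ℕ) (σ : Fin (2*n) → Bool) :
    (Pw n σ).natDegree = (boxesW n σ).card := by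
  rw [Pw, Polynomial.natDegree_prod _ _ (fun p hp => Pw_factor_ne hp)]
  rw [Finset.sum_congr rfl (fun p hp => ?_), Finset.sum_const, smul_eq_mul, mul_one]
  rw [Polynomial.natDegree_C_mul (hook_ne hp), Polynomial.natDegree_X_add_C]

lemma Pw_leadingCoeff (n : ℕ) (σ : Fin (2*n) → Bool) :
    (Pw n σ).leadingCoeff = 1 / ∏ p ∈ boxesW n σ, (hookW p : ℚ) := by
  rw [Pw, Polynomial.leadingCoeff_prod]
  have hfac : ∀ p ∈ boxesW n σ,
      (C (1 / (hookW p : ℚ)) * (X + C (contW n σ p - 2 * (n : ℚ) + 1))).leadingCoeff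
        = ((hookW p : ℚ))⁻¹ := by
    intro p _
    rw [Polynomial.leadingCoeff_mul, Polynomial.leadingCoeff_C,
      Polynomial.leadingCoeff_X_add_C, mul_one, one_div]
  rw [Finset.prod_congr rfl hfac, Finset.prod_inv_distrib, one_div]

lemma Pw_ne_zero (n : ℕ) (σ : Fin (2*n) → Bool) : Pw n σ ≠ 0 :=
  Finset.prod_ne_zero_iff.mpr (fun p hp => Pw_factor_ne hp)


/-- Let `π ∈ D_n` and let `t` be the TFPL numbers `t_{σ,τ}^π`.  Assuming
(i) `t_{σ,τ}^π = 0` unless `σ ≤ π`, and (ii) `t_{π,0_n}^π = 1` and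
`t_{π,τ}^π = 0` for `τ ≠ 0_n`, the polynomial
`A_π(m) = Σ_{σ,τ ∈ D_n} SSYT(σ, m-2n+1) t_{σ,τ}^π SSYT(τ*, n)` has degree
`deg(π)` and leading coefficient `1/H(π)` (the product of hook lengths). -/
theorem Apoly_degree_leadingCoeff (n : ℕ) (π : Fin (2*n) → Bool)
    (hπ : IsDyckFun n π)
    (t : (Fin (2*n) → Bool) → (Fin (2*n) → Bool) → ℕ)
    (h1 : ∀ σ τ, IsDyckFun n σ → IsDyckFun n τ → ¬ wordLE n σ π → t σ τ = 0)
    (h2 : t π (zeroF n) = 1)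
    (h3 : ∀ τ, IsDyckFun n τ → τ ≠ zeroF n → t π τ = 0) :
    (Apoly n t).natDegree = (boxesW n π).card ∧
    (Apoly n t).leadingCoeff = 1 / ∏ p ∈ boxesW n π, (hookW p : ℚ) := by
  classical
  set d := (boxesW n π).card with hd
  set G : (Fin (2*n) → Bool) × (Fin (2*n) → Bool) → Polynomial ℚ :=
    fun q => C ((t q.1 q.2 : ℚ)) * (Pw n q.1 * C (ssytVal n (conjF n q.2) (n : ℚ)))
    with hG
  have hApoly : Apoly n t = ∑ q ∈ (DnF n) ×ˢ (DnF n), G q := by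
    rw [Apoly, Finset.sum_product]
    rfl
  have hmemπ : π ∈ DnF n := by
    rw [DnF, Finset.mem_filter]; exact ⟨Finset.mem_univ _, hπ⟩
  have hmem0 : zeroF n ∈ DnF n := by
    rw [DnF, Finset.mem_filter]; exact ⟨Finset.mem_univ _, zeroF_isDyck n⟩
  have hmem : (π, zeroF n) ∈ (DnF n) ×ˢ (DnF n) :=
    Finset.mem_product.mpr ⟨hmemπ, hmem0⟩
  have hsplit : Apoly n t
      = G (π, zeroF n) + ∑ q ∈ ((DnF n) ×ˢ (DnF n)).erase (π, zeroF n), G q := by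
    rw [hApoly, ← Finset.add_sum_erase _ G hmem]
  have hGπ : G (π, zeroF n) = Pw n π := by
    rw [hG]
    simp only [h2, ssyt_conj_zero, Nat.cast_one, map_one, one_mul, mul_one]
  have hPπ_ne : Pw n π ≠ 0 := Pw_ne_zero n π
  have hdegPπ : (Pw n π).degree = (d : WithBot ℕ) := by
    rw [Polynomial.degree_eq_natDegree hPπ_ne, Pw_natDegree]
  have hR : (∑ q ∈ ((DnF n) ×ˢ (DnF n)).erase (π, zeroF n), G q).degree
      < (d : WithBot ℕ) := by
    refine lt_of_le_of_lt (Polynomial.degree_sum_le _ _) ?_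
    refine (Finset.sup_lt_iff (WithBot.bot_lt_coe d)).mpr ?_
    intro q hq
    have hq' := Finset.mem_of_mem_erase hq
    have hqne := Finset.ne_of_mem_erase hq
    obtain ⟨hq1, hq2⟩ := Finset.mem_product.mp hq'
    have hq1D : IsDyckFun n q.1 := (Finset.mem_filter.mp hq1).2
    have hq2D : IsDyckFun n q.2 := (Finset.mem_filter.mp hq2).2
    by_cases hσπ : q.1 = π
    · have hτ : q.2 ≠ zeroF n := by
        intro he
        exact hqne (Prod.ext hσπ he)
      have ht : t q.1 q.2 = 0 := by rw [hσπ]; exact h3 q.2 hq2D hτ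
      have : G q = 0 := by
        rw [hG]; simp [ht]
      rw [this, Polynomial.degree_zero]
      exact WithBot.bot_lt_coe d
    · by_cases hle : wordLE n q.1 π
      · have hlt : (boxesW n q.1).card < d :=
          boxes_lt n q.1 π hq1D hπ hle hσπ
        have hnd : (G q).natDegree ≤ (boxesW n q.1).card := by
          rw [hG]
          calc (C ((t q.1 q.2 : ℚ)) * (Pw n q.1 * C (ssytVal n (conjF n q.2) (n : ℚ)))).natDegree
              ≤ (C ((t q.1 q.2 : ℚ))).natDegree
                + (Pw n q.1 * C (ssytVal n (conjF n q.2) (n : ℚ))).natDegree :=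
                Polynomial.natDegree_mul_le
            _ ≤ (C ((t q.1 q.2 : ℚ))).natDegree
                + ((Pw n q.1).natDegree + (C (ssytVal n (conjF n q.2) (n : ℚ))).natDegree) :=
                Nat.add_le_add_left Polynomial.natDegree_mul_le _
            _ = (Pw n q.1).natDegree := by
                simp [Polynomial.natDegree_C]
            _ = (boxesW n q.1).card := Pw_natDegree n q.1
        calc (G q).degree ≤ ((G q).natDegree : WithBot ℕ) := Polynomial.degree_le_natDegree
          _ ≤ ((boxesW n q.1).card : WithBot ℕ) := by exact_mod_cast Nat.cast_le.mpr hnd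
          _ < (d : WithBot ℕ) := by exact_mod_cast hlt
      · have ht : t q.1 q.2 = 0 := h1 q.1 q.2 hq1D hq2D hle
        have : G q = 0 := by rw [hG]; simp [ht]
        rw [this, Polynomial.degree_zero]
        exact WithBot.bot_lt_coe d
  rw [hsplit, hGπ]
  have hRlt : (∑ q ∈ ((DnF n) ×ˢ (DnF n)).erase (π, zeroF n), G q).degree
      < (Pw n π).degree := by rw [hdegPπ]; exact hR
  constructor
  · have : (Pw n π + ∑ q ∈ ((DnF n) ×ˢ (DnF n)).erase (π, zeroF n), G q).degree
        = (Pw n π).degree := Polynomial.degree_add_eq_left_of_degree_lt hRlt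
    have := Polynomial.natDegree_eq_of_degree_eq this
    rw [this, Pw_natDegree]
  · rw [add_comm, Polynomial.leadingCoeff_add_of_degree_lt hRlt, Pw_leadingCoeff]
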